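/- Let G be the tree in which every vertex has countably infinite degree, and let H = G ⊔ G be the disjoint union of two copies of G. Then every bijection from V(G) to V(H) is a hypomorphism between G and H, but G and H are not isomorphic; in particular, G is an infinite tree that is not reconstructible. -/

import Mathlib

open SimpleGraph
namespace AlephTree

def canonT : SimpleGraph (List ℕ) where
  Adj l m := (∃ n, l = n :: m) ∨ (∃ n, m = n :: l)
  symm := ⟨by intro l m h; tauto⟩
  loopless := by
    refine ⟨fun l h => ?_⟩
    rcases h with ⟨n, h⟩ | ⟨n, h⟩ <;> exact absurd (congrArg List.length h) (by simp)

lemma mk_diff_aleph0 {V : Type} {s t : Set V} (hs : Cardinal.mk s = Cardinal.aleph0)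
    (ht : t.Finite) : Cardinal.mk ↥(s \ t) = Cardinal.aleph0 := by
  have hsc : s.Countable := Set.countable_coe_iff.mp (Cardinal.mk_le_aleph0_iff.mp hs.le)
  have hsi : s.Infinite := Set.infinite_coe_iff.mp (Cardinal.aleph0_le_mk_iff.mp hs.ge)
  have h1 : (s \ t).Countable := hsc.mono Set.diff_subset
  have h2 : (s \ t).Infinite := hsi.diff ht
  have := h1.to_subtype
  have := h2.to_subtype
  exact le_antisymm (Cardinal.mk_le_aleph0_iff.mpr inferInstance)
    (Cardinal.aleph0_le_mk_iff.mpr inferInstance)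

lemma isPath_concat {V : Type} {G : SimpleGraph V} {u v w : V} {p : G.Walk u v} (hp : p.IsPath)
    (h : G.Adj v w) (hw : w ∉ p.support) : (p.concat h).IsPath := by
  have h2 : (p.concat h).reverse.IsPath := by
    rw [Walk.reverse_concat, Walk.cons_isPath_iff]
    exact ⟨hp.reverse, by simpa using hw⟩
  rwa [Walk.isPath_reverse_iff] at h2

private def Fbuild {V : Type} (r : V) (Ch : V → Option V → Set V)
    (ce : ∀ u p, ℕ ≃ ↥(Ch u p)) : List ℕ → V × Option V
  | [] => (r, none)
  | n :: l =>
    let q := Fbuild r Ch ce l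
    (((ce q.1 q.2 n : ↥(Ch q.1 q.2)) : V), some q.1)

theorem iso_canonT {V : Type} (G : SimpleGraph V) (hc : G.Connected) (ha : G.IsAcyclic)
    (hdeg : ∀ v : V, Cardinal.mk ↥(G.neighborSet v) = Cardinal.aleph0) :
    Nonempty (G ≃g canonT) := by
  classical
  have hup : ∀ v w : V, ∃! p : G.Walk v w, p.IsPath := (IsTree.mk hc ha).existsUnique_path
  obtain ⟨r⟩ := hc.nonempty
  have T2 : ∀ (v : V) (p : G.Walk r v), p.IsPath → p.length = G.dist r v := by
    intro v p hp
    obtain ⟨q, hq, hql⟩ := (hc.preconnected r v).exists_path_of_dist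
    rw [(hup r v).unique hp hq]
    exact hql
  -- adjacent vertices have distance from root differing by exactly one
  have T3 : ∀ {u w : V}, G.Adj u w → G.dist r w = G.dist r u + 1 ∨ G.dist r u = G.dist r w + 1 := by
    intro u w h
    have h1 : G.dist r w ≤ G.dist r u + 1 := by
      have h3 := hc.dist_triangle (u := r) (v := u) (w := w)
      rwa [dist_eq_one_iff_adj.mpr h] at h3
    have h2 : G.dist r u ≤ G.dist r w + 1 := by
      have h3 := hc.dist_triangle (u := r) (v := w) (w := u)
      rwa [dist_eq_one_iff_adj.mpr h.symm] at h3
    have hne : G.dist r u ≠ G.dist r w := by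
      intro he
      obtain ⟨p, hp, hpl⟩ := (hc.preconnected r u).exists_path_of_dist
      by_cases hw : w ∈ p.support
      · have ht := hp.takeUntil hw
        have hlt : (p.takeUntil w hw).length = G.dist r w := T2 _ _ ht
        have hsplit := congrArg Walk.length (p.take_spec hw)
        rw [Walk.length_append] at hsplit
        have h0 : (p.dropUntil w hw).length = 0 := by omega
        exact h.ne' (Walk.eq_of_length_eq_zero h0)
      · have hcp : (p.concat h).IsPath := isPath_concat hp h hw
        have h4 := T2 _ _ hcp
        rw [Walk.length_concat] at h4
        omega
    omega
  -- unique parent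
  have T4 : ∀ v : V, 0 < G.dist r v → ∃! u : V, G.Adj v u ∧ G.dist r u + 1 = G.dist r v := by
    intro v hv
    have hvr : v ≠ r := by
      rintro rfl
      rw [SimpleGraph.dist_self] at hv
      omega
    obtain ⟨p, hp, hpl⟩ := (hc.preconnected v r).exists_path_of_dist
    obtain ⟨u, hadj, q, rfl⟩ := Walk.exists_eq_cons_of_ne hvr p
    have hq : q.IsPath := hp.of_cons
    have hvq : v ∉ q.support := by
      have := (Walk.cons_isPath_iff hadj q).mp hp
      exact this.2
    have hqrl : q.reverse.length = G.dist r u := T2 u q.reverse hq.reverse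
    have hqlen : q.length = G.dist r u := by rwa [Walk.length_reverse] at hqrl
    have hlen : G.dist r u + 1 = G.dist r v := by
      have : (Walk.cons hadj q).length = G.dist v r := hpl
      rw [Walk.length_cons] at this
      have hdc : G.dist v r = G.dist r v := dist_comm
      omega
    refine ⟨u, ⟨hadj, hlen⟩, ?_⟩
    rintro u' ⟨hadj', hlen'⟩
    -- build the two paths from r to v and use uniqueness
    obtain ⟨p', hp', hpl'⟩ := (hc.preconnected r u').exists_path_of_dist
    have hvp' : v ∉ p'.support := by
      intro hv'
      have htk := hp'.takeUntil hv'
      have h5 : (p'.takeUntil v hv').length = G.dist r v := T2 _ _ htk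
      have h6 := Walk.length_takeUntil_le p' hv'
      omega
    have hP' : (p'.concat hadj'.symm).IsPath := isPath_concat hp' hadj'.symm hvp'
    have hvqr : v ∉ q.reverse.support := by simpa using hvq
    have hP : (q.reverse.concat hadj.symm).IsPath := isPath_concat hq.reverse hadj.symm hvqr
    have heq : q.reverse.concat hadj.symm = p'.concat hadj'.symm := (hup r v).unique hP hP'
    -- u' lies on the support of the left path
    have hu'mem : u' ∈ (q.reverse.concat hadj.symm).support := by
      rw [heq, Walk.support_concat]
      simp
    rw [Walk.support_concat] at hu'mem
    simp only [List.concat_eq_append, List.mem_append, List.mem_singleton] at hu'mem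
    have hu'q : u' ∈ q.reverse.support := by
      rcases hu'mem with h | h
      · exact h
      · exact absurd h hadj'.ne'
    -- split q.reverse at u'
    have htk := hq.reverse.takeUntil hu'q
    have h7 : (q.reverse.takeUntil u' hu'q).length = G.dist r u' := T2 _ _ htk
    have hsplit := congrArg Walk.length (q.reverse.take_spec hu'q)
    rw [Walk.length_append, Walk.length_reverse] at hsplit
    have h8 : (q.reverse.dropUntil u' hu'q).length = 0 := by omega
    exact Walk.eq_of_length_eq_zero h8
  -- children sets and enumerations
  have hCh : ∀ (u : V) (p : Option V),
      Cardinal.mk ↥({w | G.Adj u w ∧ some w ≠ p}) = Cardinal.aleph0 := by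
    intro u p
    have hset : {w | G.Adj u w ∧ some w ≠ p} = G.neighborSet u \ {w | some w = p} := by
      ext w
      simp only [Set.mem_setOf_eq, Set.mem_diff, SimpleGraph.mem_neighborSet]
    rw [hset]
    refine mk_diff_aleph0 (hdeg u) ?_
    cases p with
    | none => simp
    | some a =>
      have : {w | some w = some a} ⊆ {a} := by
        intro w hw
        simp only [Set.mem_setOf_eq, Option.some.injEq] at hw
        simp [hw]
      exact (Set.finite_singleton a).subset this
  let Ch : V → Option V → Set V := fun u p => {w | G.Adj u w ∧ some w ≠ p}
  have ce : ∀ (u : V) (p : Option V), ℕ ≃ ↥(Ch u p) := by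
    intro u p
    refine Classical.choice (Cardinal.eq.mp ?_)
    rw [Cardinal.mk_nat, hCh]
  let f : List ℕ → V := fun l => (Fbuild r Ch ce l).1
  have hf_nil : f [] = r := rfl
  have hf_cons : ∀ (n : ℕ) (l : List ℕ),
      f (n :: l) = ((ce (Fbuild r Ch ce l).1 (Fbuild r Ch ce l).2 n : ↥(Ch (Fbuild r Ch ce l).1 (Fbuild r Ch ce l).2)) : V) := fun n l => rfl
  have hsnd_cons : ∀ (n : ℕ) (l : List ℕ), (Fbuild r Ch ce (n :: l)).2 = some (f l) :=
    fun n l => rfl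
  have hC : ∀ (n : ℕ) (l : List ℕ),
      G.Adj (f l) (f (n :: l)) ∧ some (f (n :: l)) ≠ (Fbuild r Ch ce l).2 := by
    intro n l
    exact (ce (Fbuild r Ch ce l).1 (Fbuild r Ch ce l).2 n).2
  -- main invariant
  have Q : ∀ l : List ℕ, G.dist r (f l) = l.length ∧
      ∀ x : V, (Fbuild r Ch ce l).2 = some x →
        G.Adj (f l) x ∧ G.dist r x + 1 = G.dist r (f l) := by
    intro l
    induction l with
    | nil =>
      refine ⟨by simp [hf_nil, SimpleGraph.dist_self], ?_⟩
      intro x hx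
      simp [Fbuild] at hx
    | cons n l ih =>
      obtain ⟨hadj, hne⟩ := hC n l
      have hcase : G.dist r (f (n :: l)) = G.dist r (f l) + 1 := by
        rcases T3 hadj with h | h
        · exact h
        · exfalso
          have hpos : 0 < G.dist r (f l) := by omega
          obtain ⟨pu, hpu, huniq⟩ := T4 (f l) hpos
          have e1 : f (n :: l) = pu := huniq _ ⟨hadj, by omega⟩
          cases l with
          | nil =>
            rw [hf_nil, SimpleGraph.dist_self] at hpos
            omega
          | cons m l' =>
            have h2 := (ih.2 (f l')) (hsnd_cons m l')
            have e2 : f l' = pu := huniq _ ⟨h2.1, h2.2⟩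
            rw [hsnd_cons m l'] at hne
            exact hne (by rw [e1, e2])
      refine ⟨by rw [hcase, ih.1]; simp, ?_⟩
      intro x hx
      rw [hsnd_cons n l] at hx
      cases hx
      exact ⟨hadj.symm, by omega⟩
  -- injectivity
  have hinj : Function.Injective f := by
    intro l₁ l₂ h
    induction l₁ generalizing l₂ with
    | nil =>
      cases l₂ with
      | nil => rfl
      | cons m l₂ =>
        exfalso
        have h1 := (Q []).1
        have h2 := (Q (m :: l₂)).1
        rw [h] at h1
        rw [h1] at h2
        simp at h2
    | cons n l₁ ih =>
      cases l₂ with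
      | nil =>
        exfalso
        have h1 := (Q (n :: l₁)).1
        have h2 := (Q []).1
        rw [h] at h1
        rw [h1] at h2
        simp at h2
      | cons m l₂ =>
        have h1 := (Q (n :: l₁)).1
        have hpos : 0 < G.dist r (f (n :: l₁)) := by rw [h1]; simp
        obtain ⟨pu, hpu, huniq⟩ := T4 _ hpos
        have e1 : f l₁ = pu := by
          refine huniq _ ⟨(hC n l₁).1.symm, ?_⟩
          rw [(Q l₁).1, h1]
          simp
        have e2 : f l₂ = pu := by
          refine huniq _ ?_
          rw [h]
          refine ⟨(hC m l₂).1.symm, ?_⟩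
          rw [(Q l₂).1, (Q (m :: l₂)).1]
          simp
        have hl : l₁ = l₂ := ih (e1.trans e2.symm)
        subst hl
        have hval : ((ce (Fbuild r Ch ce l₁).1 (Fbuild r Ch ce l₁).2 n) : ↥(Ch (Fbuild r Ch ce l₁).1 (Fbuild r Ch ce l₁).2)) = (ce (Fbuild r Ch ce l₁).1 (Fbuild r Ch ce l₁).2 m) := by
          apply Subtype.ext
          rw [← hf_cons n l₁, ← hf_cons m l₁]
          exact h
        rw [(ce (Fbuild r Ch ce l₁).1 (Fbuild r Ch ce l₁).2).apply_eq_iff_eq] at hval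
        rw [hval]
  -- surjectivity
  have hsurj : ∀ v : V, ∃ l : List ℕ, f l = v := by
    have main : ∀ (k : ℕ) (v : V), G.dist r v = k → ∃ l : List ℕ, f l = v := by
      intro k
      induction k with
      | zero =>
        intro v hv
        refine ⟨[], ?_⟩
        rw [hf_nil]
        exact (hc.dist_eq_zero_iff.mp hv)
      | succ k ihk =>
        intro v hv
        have hpos : 0 < G.dist r v := by omega
        obtain ⟨u, ⟨hadj, hlen⟩, _⟩ := T4 v hpos
        obtain ⟨l, rfl⟩ := ihk u (by omega)
        have hmem : v ∈ Ch (Fbuild r Ch ce l).1 (Fbuild r Ch ce l).2 := by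
          refine ⟨hadj.symm, ?_⟩
          cases hsnd : (Fbuild r Ch ce l).2 with
          | none => simp
          | some x =>
            have h2 := (Q l).2 x hsnd
            simp only [ne_eq, Option.some.injEq]
            rintro rfl
            omega
        obtain ⟨n, hn⟩ := (ce (Fbuild r Ch ce l).1 (Fbuild r Ch ce l).2).surjective ⟨v, hmem⟩
        refine ⟨n :: l, ?_⟩
        rw [hf_cons n l, hn]
    intro v
    exact main (G.dist r v) v rfl
  -- assemble the isomorphism
  let e : List ℕ ≃ V := Equiv.ofBijective f ⟨hinj, hsurj⟩
  refine ⟨(RelIso.mk e ?_).symm⟩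
  intro l₁ l₂
  show G.Adj (f l₁) (f l₂) ↔ canonT.Adj l₁ l₂
  constructor
  · intro hadj
    rcases T3 hadj with h | h
    · -- dist f l₂ = dist f l₁ + 1
      cases l₂ with
      | nil =>
        exfalso
        rw [(Q []).1, (Q l₁).1] at h
        simp at h
      | cons m l₂' =>
        have hpos : 0 < G.dist r (f (m :: l₂')) := by rw [(Q _).1]; simp
        obtain ⟨pu, hpu, huniq⟩ := T4 _ hpos
        have e1 : f l₂' = pu := by
          refine huniq _ ⟨(hC m l₂').1.symm, ?_⟩
          rw [(Q l₂').1, (Q (m :: l₂')).1]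
          simp
        have e2 : f l₁ = pu := huniq _ ⟨hadj.symm, by omega⟩
        have : l₂' = l₁ := hinj (e1.trans e2.symm)
        subst this
        exact Or.inr ⟨m, rfl⟩
    · cases l₁ with
      | nil =>
        exfalso
        rw [(Q []).1, (Q l₂).1] at h
        simp at h
      | cons m l₁' =>
        have hpos : 0 < G.dist r (f (m :: l₁')) := by rw [(Q _).1]; simp
        obtain ⟨pu, hpu, huniq⟩ := T4 _ hpos
        have e1 : f l₁' = pu := by
          refine huniq _ ⟨(hC m l₁').1.symm, ?_⟩
          rw [(Q l₁').1, (Q (m :: l₁')).1]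
          simp
        have e2 : f l₂ = pu := huniq _ ⟨hadj, by omega⟩
        have : l₁' = l₂ := hinj (e1.trans e2.symm)
        subst this
        exact Or.inl ⟨m, rfl⟩
  · rintro (⟨n, rfl⟩ | ⟨n, rfl⟩)
    · exact (hC n l₂).1.symm
    · exact (hC n l₁).1

private def walkToInduce {V : Type} {G : SimpleGraph V} {s : Set V} :
    ∀ {u v : V} (w : G.Walk u v), (∀ x ∈ w.support, x ∈ s) →
      ∀ (hu : u ∈ s) (hv : v ∈ s), (G.induce s).Walk ⟨u, hu⟩ ⟨v, hv⟩
  | _, _, Walk.nil, _, _, _ => Walk.nil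
  | u, v, Walk.cons h p, hs, hu, hv =>
    Walk.cons (by exact h)
      (walkToInduce p (fun x hx => hs x (by simp [hx])) (hs _ (by simp)) hv)

lemma reachable_induce {V : Type} {G : SimpleGraph V} {s : Set V} {u v : V}
    (w : G.Walk u v) (hs : ∀ x ∈ w.support, x ∈ s) (hu : u ∈ s) (hv : v ∈ s) :
    (G.induce s).Reachable ⟨u, hu⟩ ⟨v, hv⟩ :=
  ⟨walkToInduce w hs hu hv⟩

lemma connected_supp {V : Type} {G : SimpleGraph V} (C : G.ConnectedComponent) :
    (G.induce C.supp).Connected := by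
  rw [connected_iff]
  constructor
  · rintro ⟨u, hu⟩ ⟨v, hv⟩
    have hr : G.Reachable u v := by
      rw [ConnectedComponent.mem_supp_iff] at hu hv
      exact ConnectedComponent.exact (hu.trans hv.symm)
    obtain ⟨w⟩ := hr
    refine reachable_induce w ?_ hu hv
    intro x hx
    classical
    have hxr : G.Reachable u x := ⟨w.takeUntil x hx⟩
    rw [ConnectedComponent.mem_supp_iff]
    rw [ConnectedComponent.mem_supp_iff] at hu
    rw [← hu]
    exact ConnectedComponent.sound hxr.symm
  · obtain ⟨v, hv⟩ := C.exists_rep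
    exact ⟨⟨v, by rw [ConnectedComponent.mem_supp_iff, ← hv]; rfl⟩⟩

lemma isAcyclic_induce {V : Type} {G : SimpleGraph V} (ha : G.IsAcyclic) (s : Set V) :
    (G.induce s).IsAcyclic := by
  intro v c hc
  exact ha (c.map (Embedding.induce (G := G) s).toHom)
    ((Walk.map_isCycle_iff_of_injective (Embedding.induce (G := G) s).injective).mpr hc)

/-- neighbor set inside an induced subgraph, as a subset of the ambient neighbor set -/
def neighborSetInduceEquiv {V : Type} (G : SimpleGraph V) (s : Set V) (u : ↥s) :
    ((G.induce s).neighborSet u) ≃ ↥(G.neighborSet ↑u ∩ s) where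
  toFun x := ⟨x.val.val, x.prop, x.val.prop⟩
  invFun w := ⟨⟨w.val, w.prop.2⟩, w.prop.1⟩
  left_inv x := rfl
  right_inv w := rfl

def canonF (ι : Type) : SimpleGraph (ι × List ℕ) where
  Adj x y := x.1 = y.1 ∧ canonT.Adj x.2 y.2
  symm := ⟨by rintro ⟨i, l⟩ ⟨j, m⟩ ⟨h1, h2⟩; exact ⟨h1.symm, h2.symm⟩⟩
  loopless := ⟨by rintro ⟨i, l⟩ ⟨-, h⟩; exact canonT.loopless.irrefl l h⟩

theorem iso_canonF {V : Type} (K : SimpleGraph V) (ha : K.IsAcyclic)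
    (hdeg : ∀ v : V, Cardinal.mk ↥(K.neighborSet v) = Cardinal.aleph0)
    {ι : Type} (e : ι ≃ K.ConnectedComponent) :
    Nonempty (K ≃g canonF ι) := by
  classical
  have hψ : ∀ C : K.ConnectedComponent, Nonempty (K.induce C.supp ≃g canonT) := by
    intro C
    refine iso_canonT _ (connected_supp C) (isAcyclic_induce ha _) ?_
    rintro ⟨v, hv⟩
    have hsub : K.neighborSet v ∩ C.supp = K.neighborSet v := by
      apply Set.inter_eq_left.mpr
      intro w hw
      rw [ConnectedComponent.mem_supp_iff]
      rw [ConnectedComponent.mem_supp_iff] at hv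
      rw [← hv]
      exact ConnectedComponent.sound ⟨hw.symm.toWalk⟩
    rw [Cardinal.mk_congr (neighborSetInduceEquiv K C.supp ⟨v, hv⟩), hsub]
    exact hdeg v
  let ψ : ∀ C : K.ConnectedComponent, (K.induce C.supp ≃g canonT) :=
    fun C => (hψ C).some
  have ψcongr : ∀ (C C' : K.ConnectedComponent), C = C' → ∀ (x : ↥C.supp) (y : ↥C'.supp),
      (x : V) = (y : V) → ψ C x = ψ C' y := by
    rintro C C' rfl x y hxy
    cases Subtype.ext hxy
    rfl
  have ψsymm : ∀ (C C' : K.ConnectedComponent), C = C' → ∀ (x : List ℕ),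
      ((ψ C).symm x : V) = ((ψ C').symm x : V) := by
    rintro C C' rfl x; rfl
  have hmem : ∀ v : V, v ∈ (K.connectedComponentMk v).supp := fun v => rfl
  let F : V → ι × List ℕ :=
    fun v => (e.symm (K.connectedComponentMk v), ψ (K.connectedComponentMk v) ⟨v, hmem v⟩)
  let Ginv : ι × List ℕ → V := fun x => ((ψ (e x.1)).symm x.2 : V)
  have hcmk : ∀ (i : ι) (l : List ℕ), K.connectedComponentMk (Ginv (i, l)) = e i :=
    fun i l => ((ψ (e i)).symm l).prop
  have hleft : ∀ v, Ginv (F v) = v := by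
    intro v
    show ((ψ (e (e.symm (K.connectedComponentMk v)))).symm
        (ψ (K.connectedComponentMk v) ⟨v, hmem v⟩) : V) = v
    rw [ψsymm _ _ (e.apply_symm_apply _)]
    rw [(ψ (K.connectedComponentMk v)).symm_apply_apply]
  have hright : ∀ x, F (Ginv x) = x := by
    rintro ⟨i, l⟩
    have h1 : K.connectedComponentMk (Ginv (i, l)) = e i := hcmk i l
    refine Prod.ext ?_ ?_
    · show e.symm (K.connectedComponentMk (Ginv (i, l))) = i
      rw [h1, e.symm_apply_apply]
    · show ψ (K.connectedComponentMk (Ginv (i, l))) ⟨Ginv (i, l), hmem _⟩ = l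
      rw [ψcongr _ _ h1 ⟨Ginv (i, l), hmem _⟩ ((ψ (e i)).symm l) rfl]
      rw [(ψ (e i)).apply_symm_apply]
  refine ⟨⟨Equiv.mk F Ginv hleft hright, ?_⟩⟩
  intro u v
  show (e.symm (K.connectedComponentMk u) = e.symm (K.connectedComponentMk v) ∧
      canonT.Adj (ψ (K.connectedComponentMk u) ⟨u, hmem u⟩)
        (ψ (K.connectedComponentMk v) ⟨v, hmem v⟩)) ↔ K.Adj u v
  constructor
  · rintro ⟨h1, h2⟩
    have hC : K.connectedComponentMk v = K.connectedComponentMk u :=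
      (e.symm.injective h1).symm
    have hv' : v ∈ (K.connectedComponentMk u).supp := by
      rw [ConnectedComponent.mem_supp_iff, hC]
    rw [ψcongr _ _ hC ⟨v, hmem v⟩ ⟨v, hv'⟩ rfl] at h2
    have h3 := (ψ (K.connectedComponentMk u)).map_rel_iff.mp h2
    exact h3
  · intro h
    have hC : K.connectedComponentMk v = K.connectedComponentMk u :=
      (ConnectedComponent.sound ⟨h.toWalk⟩).symm
    have hv' : v ∈ (K.connectedComponentMk u).supp := by
      rw [ConnectedComponent.mem_supp_iff, hC]
    constructor
    · rw [hC]
    · rw [ψcongr _ _ hC ⟨v, hmem v⟩ ⟨v, hv'⟩ rfl]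
      exact (ψ (K.connectedComponentMk u)).map_rel_iff.mpr (by exact h)

theorem comp_del_equiv {V : Type} (G : SimpleGraph V) (hT : G.IsTree) (v : V) :
    Nonempty (↥(G.neighborSet v) ≃ (G.induce ({v}ᶜ : Set V)).ConnectedComponent) := by
  classical
  have hmemc : ∀ {u : V}, G.Adj v u → u ∈ ({v}ᶜ : Set V) := by
    intro u h
    simp only [Set.mem_compl_iff, Set.mem_singleton_iff]
    exact (G.ne_of_adj h).symm
  let i : ↥(G.neighborSet v) → (G.induce ({v}ᶜ : Set V)).ConnectedComponent :=
    fun u => (G.induce ({v}ᶜ : Set V)).connectedComponentMk ⟨u.val, hmemc u.prop⟩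
  have hinj : Function.Injective i := by
    rintro ⟨u₁, h₁⟩ ⟨u₂, h₂⟩ h
    by_contra hne
    have hne' : u₁ ≠ u₂ := fun hh => hne (Subtype.ext hh)
    obtain ⟨w'⟩ := ConnectedComponent.exact h
    let w := w'.map (Embedding.induce (G := G) ({v}ᶜ : Set V)).toHom
    have hvw : v ∉ w.support := by
      intro hv
      rw [Walk.support_map] at hv
      obtain ⟨x, hx1, hx2⟩ := List.mem_map.mp hv
      have := x.prop
      rw [show ((Embedding.induce (G := G) ({v}ᶜ : Set V)).toHom x : V) = x.val from rfl] at hx2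
      rw [hx2] at this
      simp at this
    have hvp : v ∉ (w.toPath).val.support := by
      intro hv
      exact hvw (Walk.support_toPath_subset w hv)
    have hq : (Walk.cons (h₁.symm) (Walk.cons h₂ Walk.nil) : G.Walk u₁ u₂).IsPath := by
      simp only [Walk.isPath_def, Walk.support_cons, Walk.support_nil]
      simp [List.nodup_cons]
      change u₁ ∉ [v, u₂] ∧ [v, u₂].Nodup
      simp [(G.ne_of_adj h₁).symm, hne', G.ne_of_adj h₂]
    have := hT.IsAcyclic.path_unique w.toPath ⟨_, hq⟩
    rw [this] at hvp
    simp at hvp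
  have hsurj : Function.Surjective i := by
    intro D
    obtain ⟨⟨x, hx⟩, hrep⟩ := D.exists_rep
    have hxv : x ≠ v := by simpa using hx
    obtain ⟨w0⟩ := hT.isConnected.preconnected x v
    have hpath := w0.toPath.prop
    set pv : G.Walk x v := w0.toPath.val with hpv
    have hrev : pv.reverse.IsPath := hpath.reverse
    obtain ⟨u, hadj, q', heq⟩ := Walk.exists_eq_cons_of_ne (Ne.symm hxv) pv.reverse
    rw [heq, Walk.cons_isPath_iff] at hrev
    obtain ⟨hq'path, hvq'⟩ := hrev
    have hsupp : ∀ y ∈ q'.reverse.support, y ∈ ({v}ᶜ : Set V) := by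
      intro y hy
      rw [Walk.support_reverse, List.mem_reverse] at hy
      simp only [Set.mem_compl_iff, Set.mem_singleton_iff]
      rintro rfl
      exact hvq' hy
    have hreach := reachable_induce q'.reverse hsupp
      (by simpa using hxv) (hmemc hadj)
    refine ⟨⟨u, hadj⟩, ?_⟩
    show (G.induce ({v}ᶜ : Set V)).connectedComponentMk ⟨u, hmemc hadj⟩ = D
    rw [ConnectedComponent.sound hreach.symm]
    rw [← hrep]
    rfl
  exact ⟨Equiv.ofBijective i ⟨hinj, hsurj⟩⟩

def sumInduceInl {α β : Type} (A : SimpleGraph α) (B : SimpleGraph β) (w : α) :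
    (A ⊕g B).induce ({Sum.inl w}ᶜ : Set (α ⊕ β)) ≃g ((A.induce ({w}ᶜ : Set α)) ⊕g B) where
  toEquiv :=
  { toFun := fun x => match x with
      | ⟨Sum.inl a, ha⟩ => Sum.inl ⟨a, by simpa using ha⟩
      | ⟨Sum.inr b, _⟩ => Sum.inr b
    invFun := fun x => match x with
      | Sum.inl a => ⟨Sum.inl a.val, by have := a.prop; simp only [Set.mem_compl_iff, Set.mem_singleton_iff] at this ⊢; simpa using this⟩
      | Sum.inr b => ⟨Sum.inr b, by simp⟩
    left_inv := by rintro ⟨x | x, hx⟩ <;> rfl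
    right_inv := by rintro (⟨a, ha⟩ | b) <;> rfl }
  map_rel_iff' := by
    rintro ⟨x | x, hx⟩ ⟨y | y, hy⟩ <;> exact Iff.rfl

def sumInduceInr {α β : Type} (A : SimpleGraph α) (B : SimpleGraph β) (w : β) :
    (A ⊕g B).induce ({Sum.inr w}ᶜ : Set (α ⊕ β)) ≃g (A ⊕g (B.induce ({w}ᶜ : Set β))) where
  toEquiv :=
  { toFun := fun x => match x with
      | ⟨Sum.inl a, _⟩ => Sum.inl a
      | ⟨Sum.inr b, hb⟩ => Sum.inr ⟨b, by simpa using hb⟩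
    invFun := fun x => match x with
      | Sum.inl a => ⟨Sum.inl a, by simp⟩
      | Sum.inr b => ⟨Sum.inr b.val, by have := b.prop; simp only [Set.mem_compl_iff, Set.mem_singleton_iff] at this ⊢; simpa using this⟩
    left_inv := by rintro ⟨x | x, hx⟩ <;> rfl
    right_inv := by rintro (a | ⟨b, hb⟩) <;> rfl }
  map_rel_iff' := by
    rintro ⟨x | x, hx⟩ ⟨y | y, hy⟩ <;> exact Iff.rfl

def isoSumMap {α α' β β' : Type} {A : SimpleGraph α} {A' : SimpleGraph α'}
    {B : SimpleGraph β} {B' : SimpleGraph β'} (e₁ : A ≃g A') (e₂ : B ≃g B') :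
    (A ⊕g B) ≃g (A' ⊕g B') where
  toEquiv := Equiv.sumCongr e₁.toEquiv e₂.toEquiv
  map_rel_iff' := by
    rintro (a | b) (a' | b')
    · exact e₁.map_rel_iff
    · exact Iff.rfl
    · exact Iff.rfl
    · exact e₂.map_rel_iff

def canonFCongr {ι κ : Type} (e : ι ≃ κ) : canonF ι ≃g canonF κ where
  toEquiv := Equiv.prodCongr e (Equiv.refl _)
  map_rel_iff' := by
    rintro ⟨i, l⟩ ⟨j, m⟩
    show (e i = e j ∧ canonT.Adj l m) ↔ (i = j ∧ canonT.Adj l m)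
    rw [e.apply_eq_iff_eq]

def canonFSum (ι κ : Type) : (canonF ι ⊕g canonF κ) ≃g canonF (ι ⊕ κ) where
  toEquiv := (Equiv.sumProdDistrib ι κ (List ℕ)).symm
  map_rel_iff' := by
    rintro (⟨i, l⟩ | ⟨i, l⟩) (⟨j, m⟩ | ⟨j, m⟩)
    · show (Sum.inl i = Sum.inl j ∧ _) ↔ (i = j ∧ _)
      simp
    · show (Sum.inl i = Sum.inr j ∧ _) ↔ _
      simp
    · show (Sum.inr i = Sum.inl j ∧ _) ↔ _
      simp
    · show (Sum.inr i = Sum.inr j ∧ _) ↔ (i = j ∧ _)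
      simp

def canonTUnit : canonT ≃g canonF Unit where
  toEquiv := (Equiv.punitProd (List ℕ)).symm
  map_rel_iff' := by
    intro l m
    show (() = () ∧ canonT.Adj l m) ↔ canonT.Adj l m
    simp

lemma sum_walk_isLeft {α β : Type} {A : SimpleGraph α} {B : SimpleGraph β} :
    ∀ {x y : α ⊕ β}, (A ⊕g B).Walk x y → x.isLeft → y.isLeft := by
  intro x y w
  induction w with
  | nil => exact id
  | cons h p ih =>
    rename_i u z _
    intro hu
    apply ih
    cases u with
    | inl a =>
      cases z with
      | inl a' => rfl
      | inr b' => exact absurd h (by simp)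
    | inr b => simp at hu

end AlephTree

open AlephTree in
/-- Let `G` be the tree in which every vertex has countably infinite degree, and let
`H = G ⊔ G` be the disjoint union of two copies of `G`. Then there is a bijection from
`V(G)` to `V(H)`, every such bijection is a hypomorphism between `G` and `H`, yet `G`
and `H` are not isomorphic; in particular, `G` is an infinite tree that is not
reconstructible. -/
theorem aleph0_regular_tree_not_reconstructible
    {V : Type} (G : SimpleGraph V) (hT : G.IsTree)
    (hdeg : ∀ v : V, Cardinal.mk ↥(G.neighborSet v) = Cardinal.aleph0) :
    Infinite V ∧
    Nonempty (V ≃ (V ⊕ V)) ∧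
    (∀ φ : V ≃ (V ⊕ V), ∀ v : V,
      Nonempty ((G.induce ({v}ᶜ : Set V)) ≃g
        ((G ⊕g G).induce ({φ v}ᶜ : Set (V ⊕ V))))) ∧
    IsEmpty (G ≃g (G ⊕g G)) := by
  classical
  have hconn := hT.isConnected
  have ha := hT.IsAcyclic
  have hinf : Infinite V := by
    obtain ⟨v⟩ := hconn.nonempty
    have h1 : Infinite ↥(G.neighborSet v) := Cardinal.aleph0_le_mk_iff.mp (hdeg v).ge
    exact Infinite.of_injective (Subtype.val : ↥(G.neighborSet v) → V) Subtype.val_injective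
  have hVV : Nonempty (V ≃ (V ⊕ V)) := by
    apply Cardinal.eq.mp
    rw [Cardinal.mk_sum]
    simp only [Cardinal.lift_id]
    exact (Cardinal.add_eq_self (Cardinal.aleph0_le_mk V)).symm
  have e0 : G ≃g canonT := (iso_canonT G hconn ha hdeg).some
  have hdegDel : ∀ (w : V) (u : ↥({w}ᶜ : Set V)),
      Cardinal.mk ↥((G.induce ({w}ᶜ : Set V)).neighborSet u) = Cardinal.aleph0 := by
    intro w u
    rw [Cardinal.mk_congr (neighborSetInduceEquiv G ({w}ᶜ : Set V) u), ← Set.diff_eq]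
    exact mk_diff_aleph0 (hdeg u.val) (Set.finite_singleton w)
  have eDel : ∀ w : V, (G.induce ({w}ᶜ : Set V)) ≃g canonF ℕ := by
    intro w
    have e1 : ℕ ≃ ↥(G.neighborSet w) :=
      Classical.choice (Cardinal.eq.mp (Cardinal.mk_nat.trans (hdeg w).symm))
    exact (iso_canonF _ (isAcyclic_induce ha _) (hdegDel w)
      (e1.trans (comp_del_equiv G hT w).some)).some
  have eNopt : Option ℕ ≃ ℕ := Denumerable.eqv (Option ℕ)
  have eNU : (ℕ ⊕ Unit) ≃ ℕ := (Equiv.optionEquivSumPUnit ℕ).symm.trans eNopt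
  refine ⟨hinf, hVV, ?_, ?_⟩
  · intro φ v
    cases hφ : φ v with
    | inl w =>
      exact ⟨(eDel v).trans (Iso.symm ((sumInduceInl G G w).trans
        ((isoSumMap (eDel w) (e0.trans canonTUnit)).trans
          ((canonFSum ℕ Unit).trans (canonFCongr eNU)))))⟩
    | inr w =>
      exact ⟨(eDel v).trans (Iso.symm ((sumInduceInr G G w).trans
        ((isoSumMap (e0.trans canonTUnit) (eDel w)).trans
          ((canonFSum Unit ℕ).trans (canonFCongr ((Equiv.sumComm Unit ℕ).trans eNU))))))⟩
  · constructor
    intro e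
    obtain ⟨v⟩ := hconn.nonempty
    have hr : G.Reachable (e.symm (Sum.inl v)) (e.symm (Sum.inr v)) :=
      hconn.preconnected _ _
    have hr2 := hr.map e.toHom
    have hfix : ∀ x : V ⊕ V, e.toHom (e.symm x) = x := fun x => e.apply_symm_apply x
    rw [hfix, hfix] at hr2
    obtain ⟨w⟩ := hr2
    have hL := sum_walk_isLeft w rfl
    simp at hL
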